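/- (Weber transformation lemma for the Lorentz force) Let u, B, Γ be smooth ℝ³-valued fields and ρ a smooth scalar field on ℝ × ℝ³ with ρ > 0 everywhere, and let μ₀ > 0 be a constant. Assume the Lagrange-multiplier evolution equation ∂Γ/∂t − u×(∇×Γ) + ∇(Γ·u) = −B/μ₀, Faraday's equation in the form ∂B/∂t − ∇×(u×B) + u(∇·B) = 0, and the mass continuity equation ∂ρ/∂t + ∇·(ρu) = 0. Then the vector field v = ((∇×Γ)×B)/ρ satisfies ∂v/∂t − u×(∇×v) + ∇(u·v) = −((∇×B)×B)/(μ₀ρ); i.e. the Lagrangian time derivative of the one-form ((∇×Γ)×B/ρ)·dx equals −((J×B)/ρ)·dx, where J = ∇×B/μ₀ is the current density. -/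

import Mathlib

noncomputable section

/-- Vectors in ℝ³. -/
abbrev Vec3 : Type := Fin 3 → ℝ

/-- Points of space-time: `(t, x)` with `t : ℝ`, `x : Fin 3 → ℝ`. -/
abbrev Pt : Type := ℝ × Vec3

/-- Euclidean dot product on ℝ³. -/
def dot3 (a b : Vec3) : ℝ := ∑ i, a i * b i

/-- Cross product on ℝ³. -/
def cross3 (a b : Vec3) : Vec3 :=
  ![a 1 * b 2 - a 2 * b 1, a 2 * b 0 - a 0 * b 2, a 0 * b 1 - a 1 * b 0]

/-- Spatial partial derivative ∂f/∂xᵢ of a scalar field. -/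
def pd (i : Fin 3) (f : Pt → ℝ) (p : Pt) : ℝ :=
  fderiv ℝ (fun x => f (p.1, x)) p.2 (Pi.single i 1)

/-- Time derivative ∂f/∂t of a scalar field. -/
def dt (f : Pt → ℝ) (p : Pt) : ℝ := deriv (fun s => f (s, p.2)) p.1

/-- Time derivative of a vector field, componentwise. -/
def dtVec (F : Pt → Vec3) (p : Pt) : Vec3 := fun i => dt (fun q => F q i) p

/-- Spatial gradient ∇f of a scalar field. -/
def grad3 (f : Pt → ℝ) (p : Pt) : Vec3 := fun i => pd i f p

/-- Spatial divergence ∇·F of a vector field. -/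
def div3 (F : Pt → Vec3) (p : Pt) : ℝ := ∑ i, pd i (fun q => F q i) p

/-- Spatial curl ∇×F of a vector field. -/
def curl3 (F : Pt → Vec3) (p : Pt) : Vec3 :=
  ![pd 1 (fun q => F q 2) p - pd 2 (fun q => F q 1) p,
    pd 2 (fun q => F q 0) p - pd 0 (fun q => F q 2) p,
    pd 0 (fun q => F q 1) p - pd 1 (fun q => F q 0) p]

/-- Directional derivative (u·∇)f of a scalar field. -/
def dirD (u : Pt → Vec3) (f : Pt → ℝ) (p : Pt) : ℝ := ∑ i, u p i * pd i f p

/-- Directional derivative (u·∇)F of a vector field. -/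
def dirDVec (u F : Pt → Vec3) (p : Pt) : Vec3 :=
  fun j => ∑ i, u p i * pd i (fun q => F q j) p

/-- (∇u)ᵀ·A, the vector with i-th component ∑ⱼ (∂uʲ/∂xⁱ) Aⱼ. -/
def gradTdot (u A : Pt → Vec3) (p : Pt) : Vec3 :=
  fun i => ∑ j, pd i (fun q => u q j) p * A p j

/-- A field is smooth when it is C^∞ jointly in time and space. -/
def SmoothS (f : Pt → ℝ) : Prop := ContDiff ℝ (⊤ : ℕ∞) f

/-- A vector field is smooth when it is C^∞ jointly in time and space. -/
def SmoothV (F : Pt → Vec3) : Prop := ContDiff ℝ (⊤ : ℕ∞) F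

-- ===== auxiliary infrastructure =====

section infra
variable {f g : Pt → ℝ} {p v : Pt}

lemma ContDiff.diffble {f : Pt → ℝ} (hf : ContDiff ℝ (⊤ : ℕ∞) f) : Differentiable ℝ f :=
  hf.differentiable (by simp)

lemma pd_eq {f : Pt → ℝ} {p : Pt} (i : Fin 3) (hf : DifferentiableAt ℝ f p) :
    pd i f p = fderiv ℝ f p (0, Pi.single i 1) := by
  have h1 : HasFDerivAt (fun x : Vec3 => (p.1, x))
      ((0 : Vec3 →L[ℝ] ℝ).prod (ContinuousLinearMap.id ℝ Vec3)) p.2 :=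
    (hasFDerivAt_const p.1 p.2).prodMk (hasFDerivAt_id p.2)
  have h2 := hf.hasFDerivAt.comp p.2 h1
  have h3 : fderiv ℝ (fun x => f (p.1, x)) p.2 =
      (fderiv ℝ f p).comp ((0 : Vec3 →L[ℝ] ℝ).prod (ContinuousLinearMap.id ℝ Vec3)) := by
    simpa only [Function.comp_def] using h2.fderiv
  simp [pd, h3]

lemma dt_eq {f : Pt → ℝ} {p : Pt} (hf : DifferentiableAt ℝ f p) :
    dt f p = fderiv ℝ f p (1, (0 : Vec3)) := by
  have h1 : HasFDerivAt (fun s : ℝ => (s, p.2))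
      ((ContinuousLinearMap.id ℝ ℝ).prod (0 : ℝ →L[ℝ] Vec3)) p.1 :=
    (hasFDerivAt_id p.1).prodMk (hasFDerivAt_const p.2 p.1)
  have h2 := (hf.hasFDerivAt.comp p.1 h1).hasDerivAt
  have h3 : HasDerivAt (fun s => f (s, p.2))
      (((fderiv ℝ f p).comp ((ContinuousLinearMap.id ℝ ℝ).prod (0 : ℝ →L[ℝ] Vec3))) 1) p.1 := h2
  have := h3.deriv
  simpa [dt] using this

lemma fd_add (hf : DifferentiableAt ℝ f p) (hg : DifferentiableAt ℝ g p) :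
    fderiv ℝ (fun q => f q + g q) p v = fderiv ℝ f p v + fderiv ℝ g p v := by
  rw [fderiv_fun_add hf hg]; simp

lemma fd_sub (hf : DifferentiableAt ℝ f p) (hg : DifferentiableAt ℝ g p) :
    fderiv ℝ (fun q => f q - g q) p v = fderiv ℝ f p v - fderiv ℝ g p v := by
  rw [fderiv_fun_sub hf hg]; simp

lemma fd_neg : fderiv ℝ (fun q => -f q) p v = -fderiv ℝ f p v := by
  rw [fderiv_fun_neg]; simp

lemma fd_mul (hf : DifferentiableAt ℝ f p) (hg : DifferentiableAt ℝ g p) :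
    fderiv ℝ (fun q => f q * g q) p v = f p * fderiv ℝ g p v + g p * fderiv ℝ f p v := by
  rw [fderiv_fun_mul hf hg]; simp


lemma fd_inv (hf : DifferentiableAt ℝ f p) (h0 : f p ≠ 0) :
    fderiv ℝ (fun q => (f q)⁻¹) p v = -((f p)^2)⁻¹ * fderiv ℝ f p v := by
  have h := ((hasDerivAt_inv h0).hasFDerivAt.comp p hf.hasFDerivAt)
  have h2 : fderiv ℝ (fun q => (f q)⁻¹) p =
      (ContinuousLinearMap.toSpanSingleton ℝ (-((f p) ^ 2)⁻¹)).comp (fderiv ℝ f p) := by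
    simpa only [Function.comp_def] using h.fderiv
  rw [h2]; simp [mul_comm]

lemma fd_const (c : ℝ) : fderiv ℝ (fun _ : Pt => c) p v = 0 := by simp

lemma fd_symm {f : Pt → ℝ} (hf : ContDiff ℝ (⊤ : ℕ∞) f) (p v w : Pt) :
    fderiv ℝ (fun q => fderiv ℝ f q w) p v = fderiv ℝ (fun q => fderiv ℝ f q v) p w := by
  have hd : Differentiable ℝ (fderiv ℝ f) :=
    (hf.fderiv_right (m := ((⊤ : ℕ∞) : WithTop ℕ∞)) (by exact_mod_cast le_top)).differentiable
      (by simp)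
  have hc : DifferentiableAt ℝ (fderiv ℝ f) p := hd p
  have e1 : ∀ z : Pt, fderiv ℝ (fun q => fderiv ℝ f q z) p = (fderiv ℝ (fderiv ℝ f) p).flip z := by
    intro z
    rw [fderiv_clm_apply hc (differentiableAt_const z)]
    simp
  rw [e1 w, e1 v]
  have hsymm := second_derivative_symmetric (f := f) (f' := fderiv ℝ f)
    (fun y => (hf.diffble y).hasFDerivAt) hc.hasFDerivAt
  simpa using (hsymm w v).symm

lemma contDiff_fd {f : Pt → ℝ} (hf : ContDiff ℝ (⊤ : ℕ∞) f) (v : Pt) :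
    ContDiff ℝ (⊤ : ℕ∞) (fun q => fderiv ℝ f q v) :=
  (hf.fderiv_right (m := ((⊤ : ℕ∞) : WithTop ℕ∞)) (by exact_mod_cast le_top)).clm_apply
    contDiff_const

lemma pd_eq_fun {f : Pt → ℝ} (hf : Differentiable ℝ f) (i : Fin 3) :
    pd i f = fun p => fderiv ℝ f p (0, Pi.single i 1) := by
  funext p; exact pd_eq i (hf p)

lemma dt_eq_fun {f : Pt → ℝ} (hf : Differentiable ℝ f) :
    dt f = fun p => fderiv ℝ f p (1, (0 : Vec3)) := by
  funext p; exact dt_eq (hf p)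

lemma contDiff_pd {f : Pt → ℝ} (hf : ContDiff ℝ (⊤ : ℕ∞) f) (i : Fin 3) :
    ContDiff ℝ (⊤ : ℕ∞) (pd i f) := by
  rw [pd_eq_fun hf.diffble i]; exact contDiff_fd hf _

lemma contDiff_dt {f : Pt → ℝ} (hf : ContDiff ℝ (⊤ : ℕ∞) f) :
    ContDiff ℝ (⊤ : ℕ∞) (dt f) := by
  rw [dt_eq_fun hf.diffble]; exact contDiff_fd hf _

lemma pd_pd_symm {f : Pt → ℝ} (hf : ContDiff ℝ (⊤ : ℕ∞) f) (i j : Fin 3) (p : Pt) :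
    pd i (pd j f) p = pd j (pd i f) p := by
  rw [pd_eq i ((contDiff_pd hf j).diffble p),
      pd_eq j ((contDiff_pd hf i).diffble p),
      pd_eq_fun hf.diffble j, pd_eq_fun hf.diffble i, fd_symm hf]

lemma dt_pd_symm {f : Pt → ℝ} (hf : ContDiff ℝ (⊤ : ℕ∞) f) (i : Fin 3) (p : Pt) :
    dt (pd i f) p = pd i (dt f) p := by
  rw [dt_eq ((contDiff_pd hf i).diffble p),
      pd_eq i ((contDiff_dt hf).diffble p),
      pd_eq_fun hf.diffble i, dt_eq_fun hf.diffble, fd_symm hf]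

lemma dt_sub {f g : Pt → ℝ} (hf : Differentiable ℝ f) (hg : Differentiable ℝ g) (p : Pt) :
    dt (fun q => f q - g q) p = dt f p - dt g p := by
  rw [dt_eq ((hf p).fun_sub (hg p)), fd_sub (hf p) (hg p), ← dt_eq (hf p), ← dt_eq (hg p)]

lemma pd_sub {f g : Pt → ℝ} (hf : Differentiable ℝ f) (hg : Differentiable ℝ g)
    (i : Fin 3) (p : Pt) :
    pd i (fun q => f q - g q) p = pd i f p - pd i g p := by
  rw [pd_eq i ((hf p).fun_sub (hg p)), fd_sub (hf p) (hg p), ← pd_eq i (hf p), ← pd_eq i (hg p)]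

lemma pd_split (i : Fin 3) (b g x : Pt → ℝ) (c₀ : ℝ)
    (hb : Differentiable ℝ b) (hg : Differentiable ℝ g) (hx : Differentiable ℝ x) (p : Pt) :
    pd i (fun q => -(c₀ * b q) - g q + x q) p = -(c₀ * pd i b p) - pd i g p + pd i x p := by
  have h1 : DifferentiableAt ℝ (fun q => -(c₀ * b q) - g q + x q) p := by fun_prop
  have h2 : DifferentiableAt ℝ (fun q => -(c₀ * b q) - g q) p := by fun_prop
  have h3 : DifferentiableAt ℝ (fun q => -(c₀ * b q)) p := by fun_prop
  rw [pd_eq i h1, fd_add h2 (hx p), fd_sub h3 (hg p), fd_neg,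
      fd_mul (differentiableAt_const c₀) (hb p), fd_const,
      ← pd_eq i (hb p), ← pd_eq i (hg p), ← pd_eq i (hx p)]
  ring

lemma curl3_zero (F : Pt → Vec3) (p : Pt) :
    curl3 F p 0 = pd 1 (fun q => F q 2) p - pd 2 (fun q => F q 1) p := by simp [curl3]
lemma curl3_one (F : Pt → Vec3) (p : Pt) :
    curl3 F p 1 = pd 2 (fun q => F q 0) p - pd 0 (fun q => F q 2) p := by simp [curl3]
lemma curl3_two (F : Pt → Vec3) (p : Pt) :
    curl3 F p 2 = pd 0 (fun q => F q 1) p - pd 1 (fun q => F q 0) p := by simp [curl3]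

end infra


set_option maxHeartbeats 4000000 in
theorem master (u B w J : Pt → Vec3) (ρ : Pt → ℝ)
    (hud : Differentiable ℝ u) (hBd : Differentiable ℝ B) (hwd : Differentiable ℝ w)
    (hρd : Differentiable ℝ ρ)
    (hρ0 : ∀ q : Pt, ρ q ≠ 0)
    (hwev : ∀ p : Pt, dtVec w p = curl3 (fun q => cross3 (u q) (w q)) p - J p)
    (hdivw : ∀ p : Pt, div3 w p = 0)
    (hfar : ∀ p : Pt, dtVec B p - curl3 (fun q => cross3 (u q) (B q)) p + div3 B p • u p = 0)
    (hcont : ∀ p : Pt, dt ρ p + div3 (fun q => ρ q • u q) p = 0)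
    (p : Pt) :
    dtVec (fun q => (ρ q)⁻¹ • cross3 (w q) (B q)) p
      - cross3 (u p) (curl3 (fun q => (ρ q)⁻¹ • cross3 (w q) (B q)) p)
      + grad3 (fun q => dot3 (u q) ((ρ q)⁻¹ • cross3 (w q) (B q))) p
      = -((ρ p)⁻¹) • cross3 (J p) (B p) := by
  -- rearranged hypotheses
  have hfar' : dtVec B p = -(div3 B p • u p) + curl3 (fun q => cross3 (u q) (B q)) p :=
    sub_eq_iff_eq_add.1 (add_eq_zero_iff_eq_neg.1 (hfar p))
  have hcont' : dt ρ p = -div3 (fun q => ρ q • u q) p :=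
    add_eq_zero_iff_eq_neg.1 (hcont p)
  have hw0 := congrFun (hwev p) 0
  have hw1 := congrFun (hwev p) 1
  have hw2 := congrFun (hwev p) 2
  have hb0 := congrFun hfar' 0
  have hb1 := congrFun hfar' 1
  have hb2 := congrFun hfar' 2
  have hdv := hdivw p
  simp only [dtVec, grad3, curl3, div3, dot3, cross3, Pi.smul_apply, smul_eq_mul,
    Pi.add_apply, Pi.sub_apply, Pi.neg_apply, Fin.sum_univ_three,
    Matrix.cons_val_zero, Matrix.cons_val_one, Matrix.head_cons,
    Matrix.cons_val_two, Matrix.tail_cons] at hw0 hw1 hw2 hb0 hb1 hb2 hdv hcont'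
  simp (disch := first | exact hρ0 _ | fun_prop (disch := exact hρ0 _)) only
    [pd_eq, dt_eq, fd_add, fd_sub, fd_neg, fd_mul, fd_inv]
    at hw0 hw1 hw2 hb0 hb1 hb2 hdv hcont'
  have hdv' : fderiv ℝ (fun q => w q 2) p (0, Pi.single 2 1)
      = -(fderiv ℝ (fun q => w q 0) p (0, Pi.single 0 1)
          + fderiv ℝ (fun q => w q 1) p (0, Pi.single 1 1)) :=
    eq_neg_of_add_eq_zero_right hdv
  funext i
  fin_cases i <;>
  · simp only [Fin.zero_eta, Fin.mk_one, Fin.reduceFinMk, dtVec, grad3, curl3, div3, dot3, cross3, Pi.smul_apply, smul_eq_mul,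
      Pi.add_apply, Pi.sub_apply, Pi.neg_apply, Fin.sum_univ_three,
      Matrix.cons_val_zero, Matrix.cons_val_one, Matrix.head_cons,
      Matrix.cons_val_two, Matrix.tail_cons]
    simp (disch := first | exact hρ0 _ | fun_prop (disch := exact hρ0 _)) only
      [pd_eq, dt_eq, fd_add, fd_sub, fd_neg, fd_mul, fd_inv]
    simp only [hw0, hw1, hw2, hb0, hb1, hb2, hcont', hdv']
    field_simp [hρ0 p]
    ring

/-- Weber transformation lemma for the Lorentz force: the
    Lie-dragging derivative of the one-form ((∇×Γ)×B/ρ)·dx equals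
    −((J×B)/ρ)·dx with J = ∇×B/μ₀. -/
theorem weber_lorentz_force_lemma
    (u B Γ : Pt → Vec3) (ρ : Pt → ℝ) (μ₀ : ℝ)
    (hu : SmoothV u) (hB : SmoothV B) (hΓ : SmoothV Γ) (hρ : SmoothS ρ)
    (hρpos : ∀ p : Pt, 0 < ρ p) (hμ₀ : 0 < μ₀)
    (hΓev : ∀ p : Pt,
      dtVec Γ p - cross3 (u p) (curl3 Γ p)
        + grad3 (fun q => dot3 (Γ q) (u q)) p = -(μ₀⁻¹) • B p)
    (hfar : ∀ p : Pt,
      dtVec B p - curl3 (fun q => cross3 (u q) (B q)) p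
        + div3 B p • u p = 0)
    (hcont : ∀ p : Pt, dt ρ p + div3 (fun q => ρ q • u q) p = 0) :
    ∀ p : Pt,
      dtVec (fun q => (ρ q)⁻¹ • cross3 (curl3 Γ q) (B q)) p
        - cross3 (u p)
            (curl3 (fun q => (ρ q)⁻¹ • cross3 (curl3 Γ q) (B q)) p)
        + grad3
            (fun q => dot3 (u q) ((ρ q)⁻¹ • cross3 (curl3 Γ q) (B q))) p
        = -((μ₀ * ρ p)⁻¹) • cross3 (curl3 B p) (B p) := by
  have hu' : ContDiff ℝ (⊤ : ℕ∞) u := hu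
  have hB' : ContDiff ℝ (⊤ : ℕ∞) B := hB
  have hΓ' : ContDiff ℝ (⊤ : ℕ∞) Γ := hΓ
  have hρ' : ContDiff ℝ (⊤ : ℕ∞) ρ := hρ
  have hud : Differentiable ℝ u := hu'.differentiable (by simp)
  have hBd : Differentiable ℝ B := hB'.differentiable (by simp)
  have hρd : Differentiable ℝ ρ := hρ'.diffble
  have hρ0 : ∀ q : Pt, ρ q ≠ 0 := fun q => (hρpos q).ne'
  have hΓc : ∀ c : Fin 3, ContDiff ℝ (⊤ : ℕ∞) (fun q => Γ q c) := fun c => by fun_prop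
  have huc : ∀ c : Fin 3, ContDiff ℝ (⊤ : ℕ∞) (fun q => u q c) := fun c => by fun_prop
  have hBc : ∀ c : Fin 3, ContDiff ℝ (⊤ : ℕ∞) (fun q => B q c) := fun c => by fun_prop
  -- curl components as functions
  have e0 : (fun q => curl3 Γ q 0)
      = fun q => pd 1 (fun r => Γ r 2) q - pd 2 (fun r => Γ r 1) q := by
    funext q; exact curl3_zero Γ q
  have e1 : (fun q => curl3 Γ q 1)
      = fun q => pd 2 (fun r => Γ r 0) q - pd 0 (fun r => Γ r 2) q := by
    funext q; exact curl3_one Γ q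
  have e2 : (fun q => curl3 Γ q 2)
      = fun q => pd 0 (fun r => Γ r 1) q - pd 1 (fun r => Γ r 0) q := by
    funext q; exact curl3_two Γ q
  have hwc0 : ContDiff ℝ (⊤ : ℕ∞) (fun q => curl3 Γ q 0) := by
    rw [e0]; exact (contDiff_pd (hΓc 2) 1).sub (contDiff_pd (hΓc 1) 2)
  have hwc1 : ContDiff ℝ (⊤ : ℕ∞) (fun q => curl3 Γ q 1) := by
    rw [e1]; exact (contDiff_pd (hΓc 0) 2).sub (contDiff_pd (hΓc 2) 0)
  have hwc2 : ContDiff ℝ (⊤ : ℕ∞) (fun q => curl3 Γ q 2) := by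
    rw [e2]; exact (contDiff_pd (hΓc 1) 0).sub (contDiff_pd (hΓc 0) 1)
  have hwd : Differentiable ℝ (curl3 Γ) := by
    rw [differentiable_pi]
    intro j; fin_cases j
    exacts [hwc0.diffble, hwc1.diffble, hwc2.diffble]
  -- smoothness of the Bernoulli-type scalar
  have hD : ContDiff ℝ (⊤ : ℕ∞) (fun r => dot3 (Γ r) (u r)) := by
    simp only [dot3, Fin.sum_univ_three]; fun_prop
  -- cross-product components are smooth
  have hX0 : Differentiable ℝ (fun q => cross3 (u q) (curl3 Γ q) 0) := by
    simp only [cross3, Matrix.cons_val_zero]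
    exact (((huc 1).mul hwc2).sub ((huc 2).mul hwc1)).diffble
  have hX1 : Differentiable ℝ (fun q => cross3 (u q) (curl3 Γ q) 1) := by
    simp only [cross3, Matrix.cons_val_one, Matrix.head_cons]
    exact (((huc 2).mul hwc0).sub ((huc 0).mul hwc2)).diffble
  have hX2 : Differentiable ℝ (fun q => cross3 (u q) (curl3 Γ q) 2) := by
    simp only [cross3, Matrix.cons_val_two, Matrix.tail_cons, Matrix.head_cons]
    exact (((huc 0).mul hwc1).sub ((huc 1).mul hwc0)).diffble
  -- the evolution equation for Γ, solved for the time derivative, componentwise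
  have key : ∀ c : Fin 3, dt (fun r => Γ r c)
      = fun q => -(μ₀⁻¹ * B q c) - pd c (fun r => dot3 (Γ r) (u r)) q
          + cross3 (u q) (curl3 Γ q) c := by
    intro c; funext q
    have h1 : dtVec Γ q = (-(μ₀⁻¹) • B q - grad3 (fun r => dot3 (Γ r) (u r)) q)
        + cross3 (u q) (curl3 Γ q) := eq_add_of_sub_eq (eq_sub_of_add_eq (hΓev q))
    have h2 := congrFun h1 c
    simpa [dtVec, grad3, Pi.sub_apply, Pi.add_apply, Pi.smul_apply, smul_eq_mul, neg_mul,
      sub_eq_add_neg] using h2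
  -- evolution equation for w = curl Γ
  have dtw0 : ∀ p : Pt, dt (fun q => curl3 Γ q 0) p
      = curl3 (fun q => cross3 (u q) (curl3 Γ q)) p 0 - μ₀⁻¹ * curl3 B p 0 := by
    intro p
    rw [e0, dt_sub (contDiff_pd (hΓc 2) 1).diffble (contDiff_pd (hΓc 1) 2).diffble,
      dt_pd_symm (hΓc 2) 1 p, dt_pd_symm (hΓc 1) 2 p, key 2, key 1,
      pd_split 1 (fun q => B q 2) (pd 2 (fun r => dot3 (Γ r) (u r)))
        (fun q => cross3 (u q) (curl3 Γ q) 2) μ₀⁻¹ (hBc 2).diffble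
        (contDiff_pd hD 2).diffble hX2 p,
      pd_split 2 (fun q => B q 1) (pd 1 (fun r => dot3 (Γ r) (u r)))
        (fun q => cross3 (u q) (curl3 Γ q) 1) μ₀⁻¹ (hBc 1).diffble
        (contDiff_pd hD 1).diffble hX1 p,
      pd_pd_symm hD 1 2 p, curl3_zero, curl3_zero]
    ring
  have dtw1 : ∀ p : Pt, dt (fun q => curl3 Γ q 1) p
      = curl3 (fun q => cross3 (u q) (curl3 Γ q)) p 1 - μ₀⁻¹ * curl3 B p 1 := by
    intro p
    rw [e1, dt_sub (contDiff_pd (hΓc 0) 2).diffble (contDiff_pd (hΓc 2) 0).diffble,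
      dt_pd_symm (hΓc 0) 2 p, dt_pd_symm (hΓc 2) 0 p, key 0, key 2,
      pd_split 2 (fun q => B q 0) (pd 0 (fun r => dot3 (Γ r) (u r)))
        (fun q => cross3 (u q) (curl3 Γ q) 0) μ₀⁻¹ (hBc 0).diffble
        (contDiff_pd hD 0).diffble hX0 p,
      pd_split 0 (fun q => B q 2) (pd 2 (fun r => dot3 (Γ r) (u r)))
        (fun q => cross3 (u q) (curl3 Γ q) 2) μ₀⁻¹ (hBc 2).diffble
        (contDiff_pd hD 2).diffble hX2 p,
      pd_pd_symm hD 2 0 p, curl3_one, curl3_one]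
    ring
  have dtw2 : ∀ p : Pt, dt (fun q => curl3 Γ q 2) p
      = curl3 (fun q => cross3 (u q) (curl3 Γ q)) p 2 - μ₀⁻¹ * curl3 B p 2 := by
    intro p
    rw [e2, dt_sub (contDiff_pd (hΓc 1) 0).diffble (contDiff_pd (hΓc 0) 1).diffble,
      dt_pd_symm (hΓc 1) 0 p, dt_pd_symm (hΓc 0) 1 p, key 1, key 0,
      pd_split 0 (fun q => B q 1) (pd 1 (fun r => dot3 (Γ r) (u r)))
        (fun q => cross3 (u q) (curl3 Γ q) 1) μ₀⁻¹ (hBc 1).diffble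
        (contDiff_pd hD 1).diffble hX1 p,
      pd_split 1 (fun q => B q 0) (pd 0 (fun r => dot3 (Γ r) (u r)))
        (fun q => cross3 (u q) (curl3 Γ q) 0) μ₀⁻¹ (hBc 0).diffble
        (contDiff_pd hD 0).diffble hX0 p,
      pd_pd_symm hD 0 1 p, curl3_two, curl3_two]
    ring
  have hwev : ∀ p : Pt, dtVec (curl3 Γ) p
      = curl3 (fun q => cross3 (u q) (curl3 Γ q)) p - (fun q => μ₀⁻¹ • curl3 B q) p := by
    intro p; funext j
    have : dtVec (curl3 Γ) p j = dt (fun q => curl3 Γ q j) p := rfl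
    rw [this]
    fin_cases j
    · simpa [Pi.sub_apply, Pi.smul_apply, smul_eq_mul] using dtw0 p
    · simpa [Pi.sub_apply, Pi.smul_apply, smul_eq_mul] using dtw1 p
    · simpa [Pi.sub_apply, Pi.smul_apply, smul_eq_mul] using dtw2 p
  have hdivw : ∀ p : Pt, div3 (curl3 Γ) p = 0 := by
    intro p
    simp only [div3, Fin.sum_univ_three]
    rw [e0, e1, e2,
      pd_sub (contDiff_pd (hΓc 2) 1).diffble (contDiff_pd (hΓc 1) 2).diffble 0 p,
      pd_sub (contDiff_pd (hΓc 0) 2).diffble (contDiff_pd (hΓc 2) 0).diffble 1 p,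
      pd_sub (contDiff_pd (hΓc 1) 0).diffble (contDiff_pd (hΓc 0) 1).diffble 2 p,
      pd_pd_symm (hΓc 2) 0 1 p, pd_pd_symm (hΓc 1) 0 2 p, pd_pd_symm (hΓc 0) 1 2 p]
    ring
  intro p
  have hm := master u B (curl3 Γ) (fun q => μ₀⁻¹ • curl3 B q) ρ hud hBd hwd hρd hρ0
    hwev hdivw hfar hcont p
  rw [hm]
  funext j
  fin_cases j <;>
    simp [cross3, Pi.smul_apply, smul_eq_mul, Matrix.cons_val_zero, Matrix.cons_val_one,
      Matrix.head_cons, Matrix.cons_val_two, Matrix.tail_cons, mul_inv] <;> ring
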